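/- Let K be a field (of arbitrary characteristic) and V a homogeneous K-subspace of K[x] (i.e., V is spanned by a set of monomials x^n). Then V is a Mathieu subspace of K[x] if and only if one of the following holds: (1) V = K[x]; (2) V is finite dimensional over K and 1 ∉ V; (3) 1 ∉ V and there exists N ≥ 1 with x^N K[x] ⊆ V; (4) V is spanned by the monomials x^n with n in an infinite set S of positive integers such that there exists no integer d ≥ 1 with md ∈ S for all m ≥ 1. -/

import Mathlib

open Polynomial

lemma support_subset_of_mem_span {K : Type*} [Field K] {T : Set ℕ} {p : Polynomial K}
    (hp : p ∈ Submodule.span K ((fun n => (X : Polynomial K) ^ n) '' T)) :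
    ∀ n ∈ p.support, n ∈ T := by
  induction hp using Submodule.span_induction with
  | mem x hx =>
      obtain ⟨n, hn, rfl⟩ := hx
      intro k hk
      rw [support_X_pow n, Finset.mem_singleton] at hk
      rwa [hk]
  | zero => simp
  | add x y _ _ hx hy =>
      intro n hn
      rcases Finset.mem_union.mp (support_add hn) with h | h
      exacts [hx n h, hy n h]
  | smul c x _ hx =>
      intro n hn
      exact hx n (support_smul c x hn)

lemma mem_iff_support {K : Type*} [Field K] {V : Submodule K (Polynomial K)}
    (hhom : ∃ T : Set ℕ, V = Submodule.span K ((fun n => (X : Polynomial K) ^ n) '' T))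
    {p : Polynomial K} :
    p ∈ V ↔ ∀ n ∈ p.support, (X : Polynomial K) ^ n ∈ V := by
  constructor
  · obtain ⟨T, rfl⟩ := hhom
    intro hp n hn
    exact Submodule.subset_span ⟨n, support_subset_of_mem_span hp n hn, rfl⟩
  · intro h
    rw [p.as_sum_support]
    refine Submodule.sum_mem _ fun i hi => ?_
    rw [← C_mul_X_pow_eq_monomial, ← smul_eq_C_mul]
    exact V.smul_mem _ (h i hi)

lemma li_X_pow {K : Type*} [Field K] (S : Set ℕ) :
    LinearIndependent K (fun n : S => (X : Polynomial K) ^ (n : ℕ)) := by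
  rw [linearIndependent_iff']
  intro s g hg i hi
  have h := congrArg (fun q : Polynomial K => q.coeff (i : ℕ)) hg
  simp only [finset_sum_coeff, coeff_smul, coeff_X_pow, smul_eq_mul, coeff_zero] at h
  rw [Finset.sum_eq_single i] at h
  · simpa using h
  · intro b _ hb
    have : ((i : ℕ) : ℕ) ≠ (b : ℕ) := fun h' => hb (Subtype.ext h'.symm)
    simp [this]
  · exact fun h' => (h' hi).elim

/-- A `K`-subspace `V` of `K[x]` is a Mathieu subspace if for all `a, b ∈ K[x]` with
`a^m ∈ V` for all `m ≥ 1`, one has `a^m * b ∈ V` for all sufficiently large `m`. -/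
def IsMathieuSubspace {K : Type*} [Field K] (V : Submodule K (Polynomial K)) : Prop :=
  ∀ a b : Polynomial K, (∀ m : ℕ, 1 ≤ m → a ^ m ∈ V) →
    ∃ N : ℕ, ∀ m : ℕ, N ≤ m → a ^ m * b ∈ V

theorem homogeneous_MS_classification {K : Type*} [Field K] (V : Submodule K (Polynomial K))
    (hhom : ∃ T : Set ℕ, V = Submodule.span K ((fun n => (X : Polynomial K) ^ n) '' T)) :
    IsMathieuSubspace V ↔
      (V = ⊤) ∨
      (FiniteDimensional K V ∧ (1 : Polynomial K) ∉ V) ∨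
      ((1 : Polynomial K) ∉ V ∧ ∃ N : ℕ, 1 ≤ N ∧
        Submodule.restrictScalars K (Ideal.span {(X : Polynomial K) ^ N}) ≤ V) ∨
      (∃ S : Set ℕ, S.Infinite ∧ (∀ n ∈ S, 1 ≤ n) ∧
        V = Submodule.span K ((fun n => (X : Polynomial K) ^ n) '' S) ∧
        ¬ ∃ d : ℕ, 1 ≤ d ∧ ∀ m : ℕ, 1 ≤ m → m * d ∈ S) := by
  classical
  set T₀ : Set ℕ := {n : ℕ | (X : Polynomial K) ^ n ∈ V} with hT₀
  have hmem : ∀ p : Polynomial K, p ∈ V ↔ ∀ n ∈ p.support, n ∈ T₀ :=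
    fun p => mem_iff_support hhom
  have hspan : V = Submodule.span K ((fun n => (X : Polynomial K) ^ n) '' T₀) := by
    apply le_antisymm
    · intro p hp
      rw [p.as_sum_support]
      refine Submodule.sum_mem _ fun i hi => ?_
      rw [← C_mul_X_pow_eq_monomial, ← smul_eq_C_mul]
      exact Submodule.smul_mem _ _
        (Submodule.subset_span ⟨i, (hmem p).mp hp i hi, rfl⟩)
    · rw [Submodule.span_le]
      rintro q ⟨n, hn, rfl⟩
      exact hn
  have hzero : (1 : Polynomial K) ∈ V ↔ (0 : ℕ) ∈ T₀ := by
    simp [hT₀, Set.mem_setOf_eq]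
  -- if V is finite dimensional then T₀ is finite
  have hfin : FiniteDimensional K V → T₀.Finite := by
    intro hf
    by_contra hinf
    have hinf' : T₀.Infinite := hinf
    haveI := hinf'.to_subtype
    have hli : LinearIndependent K (fun n : T₀ => (⟨(X : Polynomial K) ^ (n : ℕ),
        n.2⟩ : V)) := by
      apply LinearIndependent.of_comp V.subtype
      exact li_X_pow T₀
    exact Module.Finite.not_linearIndependent_of_infinite _ hli
  constructor
  · intro hMS
    by_cases h1 : (1 : Polynomial K) ∈ V
    · left
      rw [Submodule.eq_top_iff']
      intro b
      obtain ⟨N, hN⟩ := hMS 1 b (fun m _ => by simpa using h1)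
      simpa using hN N le_rfl
    · by_cases hTfin : T₀.Finite
      · right; left
        refine ⟨?_, h1⟩
        rw [hspan]
        exact FiniteDimensional.span_of_finite K (hTfin.image _)
      · by_cases hd : ∃ d : ℕ, 1 ≤ d ∧ ∀ m : ℕ, 1 ≤ m → m * d ∈ T₀
        · right; right; left
          obtain ⟨d, hd1, hdm⟩ := hd
          have key : ∀ j : ℕ, ∃ Nj : ℕ, ∀ m : ℕ, Nj ≤ m → (m * d + j) ∈ T₀ := by
            intro j
            obtain ⟨N, hN⟩ := hMS (X ^ d) (X ^ j) (fun m hm => by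
              rw [← pow_mul, mul_comm]
              exact hdm m hm)
            refine ⟨N, fun m hm => ?_⟩
            have := hN m hm
            rwa [← pow_mul, ← pow_add, mul_comm d m] at this
          choose Nf hNf using key
          set B : ℕ := (Finset.range d).sup Nf with hB
          refine ⟨h1, d * (B + 1), le_trans hd1 (Nat.le_mul_of_pos_right _ (Nat.succ_pos B)), ?_⟩
          have hTall : ∀ n : ℕ, d * (B + 1) ≤ n → n ∈ T₀ := by
            intro n hn
            have hdpos : 0 < d := hd1
            have hj : n % d < d := Nat.mod_lt _ hdpos
            have hge : Nf (n % d) ≤ n / d := by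
              have h1' : B + 1 ≤ n / d := by
                rw [Nat.le_div_iff_mul_le hdpos]
                rw [mul_comm] at hn
                exact hn
              have h2' : Nf (n % d) ≤ B := Finset.le_sup (Finset.mem_range.mpr hj)
              omega
            have h3 := hNf (n % d) (n / d) hge
            have heq : n / d * d + n % d = n := by rw [mul_comm]; exact Nat.div_add_mod n d
            rwa [heq] at h3
          intro q hq
          rw [hmem]
          intro n hn
          rw [Submodule.restrictScalars_mem] at hq
          obtain ⟨r, hr⟩ := Ideal.mem_span_singleton'.mp hq
          apply hTall
          by_contra hlt
          push_neg at hlt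
          have : q.coeff n = 0 := by
            rw [← hr, coeff_mul_X_pow']
            rw [if_neg (by omega)]
          exact (Polynomial.mem_support_iff.mp hn) this
        · right; right; right
          refine ⟨T₀, hTfin, ?_, hspan, hd⟩
          intro n hn
          rcases Nat.eq_zero_or_pos n with rfl | h
          · exact absurd (hzero.mpr hn) h1
          · exact h
  · rintro (rfl | ⟨hfd, h1⟩ | ⟨h1, N, hN1, hNV⟩ | ⟨S, hSinf, hS1, hVS, hS⟩)
    · intro a b _
      exact ⟨0, fun m _ => Submodule.mem_top⟩
    · -- finite dimensional case
      intro a b ha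
      refine ⟨1, fun m hm => ?_⟩
      suffices hA : a = 0 by
        rw [hA, zero_pow (by omega : m ≠ 0), zero_mul]
        exact V.zero_mem
      by_contra ha0
      have hTfin := hfin hfd
      have h0T : (0 : ℕ) ∉ T₀ := fun h => h1 (hzero.mpr h)
      set d := a.natDegree with hdd
      have hmd : ∀ m : ℕ, 1 ≤ m → m * d ∈ T₀ := by
        intro m hm
        have hne : a ^ m ≠ 0 := pow_ne_zero _ ha0
        have := natDegree_mem_support_of_nonzero hne
        rw [natDegree_pow] at this
        exact (hmem _).mp (ha m hm) _ this
      rcases Nat.eq_zero_or_pos d with hd0 | hdpos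
      · exact h0T (by simpa [hd0] using hmd 1 le_rfl)
      · apply hTfin.not_infinite
        refine Set.infinite_of_injective_forall_mem
          (f := fun m : ℕ => (m + 1) * d) ?_ ?_
        · intro x y hxy
          simp only at hxy
          have := Nat.eq_of_mul_eq_mul_right hdpos hxy
          omega
        · intro m
          exact hmd (m + 1) (by omega)
    · -- ideal case
      intro a b ha
      by_cases ha0 : a = 0
      · exact ⟨1, fun m hm => by
          rw [ha0, zero_pow (by omega : m ≠ 0), zero_mul]; exact V.zero_mem⟩
      · have haV : a ∈ V := by simpa using ha 1 le_rfl
        have h0 : a.coeff 0 = 0 := by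
          by_contra hc
          have : (0 : ℕ) ∈ T₀ := (hmem a).mp haV 0 (Polynomial.mem_support_iff.mpr hc)
          exact h1 (hzero.mpr this)
        have hXdvd : (X : Polynomial K) ∣ a := Polynomial.X_dvd_iff.mpr h0
        refine ⟨N, fun m hm => ?_⟩
        apply hNV
        rw [Submodule.restrictScalars_mem]
        rw [Ideal.mem_span_singleton]
        exact dvd_mul_of_dvd_left
          (dvd_trans (pow_dvd_pow _ hm) (pow_dvd_pow_of_dvd hXdvd m)) b
    · -- infinite sparse case
      subst hVS
      intro a b ha
      refine ⟨1, fun m hm => ?_⟩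
      suffices hA : a = 0 by
        rw [hA, zero_pow (by omega : m ≠ 0), zero_mul]
        exact Submodule.zero_mem _
      by_contra ha0
      set d := a.natDegree with hdd
      have hmd : ∀ m : ℕ, 1 ≤ m → m * d ∈ S := by
        intro m hm
        have hne : a ^ m ≠ 0 := pow_ne_zero _ ha0
        have hmem' := natDegree_mem_support_of_nonzero hne
        rw [natDegree_pow] at hmem'
        exact support_subset_of_mem_span (ha m hm) _ hmem'
      rcases Nat.eq_zero_or_pos d with hd0 | hdpos
      · have := hS1 _ (by simpa [hd0] using hmd 1 le_rfl)
        omega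
      · exact hS ⟨d, hdpos, hmd⟩
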